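/- Let H, W, k be positive integers with k ∣ H and k ∣ W, let w : ℤ → ℤ → ℂ be an arbitrary interpolation kernel, and let X : ℤ → ℤ → ℂ be an image. Define the k-fold down-sampled image D(X)(x',y') := Σ_{s=0}^{k-1} Σ_{t=0}^{k-1} w(s,t)·X(kx'+s, ky'+t), and the kernel frequency response β(u',v') := Σ_{s=0}^{k-1} Σ_{t=0}^{k-1} w(s,t)·exp(2πi(u's/(2H) + v't/(2W))). Then for all integers u, v, the 2D discrete Fourier transform of D(X) on the 2(H/k)×2(W/k) grid satisfies the aliasing formula F_{D(X)}(u,v) = (1/k²) · Σ_{a=0}^{k-1} Σ_{b=0}^{k-1} β(u + 2aH/k, v + 2bW/k) · F_X(u + 2aH/k, v + 2bW/k), where F_X is the 2D discrete Fourier transform of X on the 2H×2W grid (evaluated at all integer frequencies via its defining, periodic, formula). -/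

import Mathlib

/-- The 2D discrete Fourier transform of an image `Z : ℤ → ℤ → ℂ` on the `2M × 2N` grid:
`F_Z(u,v) = ∑_{x=-M}^{M-1} ∑_{y=-N}^{N-1} Z(x,y)·exp(-2πi(ux/(2M) + vy/(2N)))`. -/
noncomputable def dft (M N : ℤ) (Z : ℤ → ℤ → ℂ) (u v : ℤ) : ℂ :=
  ∑ x ∈ Finset.Icc (-M) (M - 1), ∑ y ∈ Finset.Icc (-N) (N - 1),
    Z x y * Complex.exp (-(2 * (Real.pi : ℂ) * Complex.I) *
      ((u : ℂ) * (x : ℂ) / (2 * (M : ℂ)) + (v : ℂ) * (y : ℂ) / (2 * (N : ℂ))))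

/-- The `k`-fold down-sampled image with interpolation kernel `w`:
`D(X)(x',y') = ∑_{s=0}^{k-1} ∑_{t=0}^{k-1} w(s,t)·X(kx'+s, ky'+t)`. -/
noncomputable def downsample (k : ℤ) (w X : ℤ → ℤ → ℂ) (x' y' : ℤ) : ℂ :=
  ∑ s ∈ Finset.Icc (0 : ℤ) (k - 1), ∑ t ∈ Finset.Icc (0 : ℤ) (k - 1),
    w s t * X (k * x' + s) (k * y' + t)

/-- The frequency response of the kernel `w` on the `2H × 2W` grid:
`β(u',v') = ∑_{s=0}^{k-1} ∑_{t=0}^{k-1} w(s,t)·exp(2πi(u's/(2H) + v't/(2W)))`. -/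
noncomputable def beta (H W k : ℤ) (w : ℤ → ℤ → ℂ) (u' v' : ℤ) : ℂ :=
  ∑ s ∈ Finset.Icc (0 : ℤ) (k - 1), ∑ t ∈ Finset.Icc (0 : ℤ) (k - 1),
    w s t * Complex.exp ((2 * (Real.pi : ℂ) * Complex.I) *
      ((u' : ℂ) * (s : ℂ) / (2 * (H : ℂ)) + (v' : ℂ) * (t : ℂ) / (2 * (W : ℂ))))

/-- The aliasing formula: the DFT of the `k`-fold down-sampled image on the
`2(H/k) × 2(W/k)` grid satisfies, for all integers `u, v`,
`F_{D(X)}(u,v) = (1/k²) ∑_{a=0}^{k-1} ∑_{b=0}^{k-1}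
  β(u + 2aH/k, v + 2bW/k)·F_X(u + 2aH/k, v + 2bW/k)`. -/
private lemma icc_to_range (k : ℤ) (f : ℤ → ℂ) :
    ∑ a ∈ Finset.Icc (0:ℤ) (k-1), f a = ∑ n ∈ Finset.range k.toNat, f (n:ℤ) := by
  refine Finset.sum_nbij' (fun a => a.toNat) (fun n => (n:ℤ)) ?_ ?_ ?_ ?_ ?_
  · intro a ha
    simp only [Finset.mem_Icc] at ha
    simp only [Finset.mem_range]
    omega
  · intro n hn
    simp only [Finset.mem_range] at hn
    simp only [Finset.mem_Icc]
    omega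
  · intro a ha
    simp only [Finset.mem_Icc] at ha
    show ((a.toNat : ℤ)) = a
    omega
  · intro n _; simp
  · intro a ha
    simp only [Finset.mem_Icc] at ha
    congr 1
    exact (Int.toNat_of_nonneg ha.1).symm

private lemma orth (k m : ℤ) (hk : 0 < k) :
    ∑ a ∈ Finset.Icc (0:ℤ) (k-1),
      Complex.exp (2 * (Real.pi:ℂ) * Complex.I * ((m:ℂ) * (a:ℂ) / (k:ℂ))) =
    if k ∣ m then (k:ℂ) else 0 := by
  have hk0 : (k:ℂ) ≠ 0 := by exact_mod_cast hk.ne'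
  rw [icc_to_range]
  set z : ℂ := Complex.exp (2 * (Real.pi:ℂ) * Complex.I * ((m:ℂ) / (k:ℂ))) with hz
  have hterm : ∀ n : ℕ, Complex.exp (2 * (Real.pi:ℂ) * Complex.I * ((m:ℂ) * ((n:ℤ):ℂ) / (k:ℂ))) = z ^ n := by
    intro n
    rw [hz, ← Complex.exp_nat_mul]
    congr 1
    push_cast
    ring
  rw [Finset.sum_congr rfl fun n _ => hterm n]
  have hkk : ((k.toNat : ℕ) : ℂ) = (k:ℂ) := by
    have : (k.toNat : ℤ) = k := Int.toNat_of_nonneg hk.le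
    exact_mod_cast congrArg (Int.cast : ℤ → ℂ) this
  by_cases hdvd : k ∣ m
  · obtain ⟨c, rfl⟩ := hdvd
    have hz1 : z = 1 := by
      rw [hz]
      have : 2 * (Real.pi:ℂ) * Complex.I * (((k * c : ℤ):ℂ) / (k:ℂ)) = (c:ℂ) * (2 * (Real.pi:ℂ) * Complex.I) := by
        push_cast; field_simp
      rw [this, Complex.exp_int_mul_two_pi_mul_I]
    simp [hz1, hkk]
  · have hz1 : z ≠ 1 := by
      intro h
      rw [hz, Complex.exp_eq_one_iff] at h
      obtain ⟨n, hn⟩ := h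
      have hpi : (Real.pi:ℂ) ≠ 0 := by exact_mod_cast Real.pi_ne_zero
      have h2 : (2:ℂ) * (Real.pi:ℂ) * Complex.I ≠ 0 := by
        simp [hpi, Complex.I_ne_zero]
      have hmc : (m:ℂ) = (n:ℂ) * (k:ℂ) := by
        field_simp at hn
        have hn' : 2 * (Real.pi:ℂ) * Complex.I * (m:ℂ) = 2 * (Real.pi:ℂ) * Complex.I * ((n:ℂ) * (k:ℂ)) := by
          linear_combination (2 * (Real.pi:ℂ) * Complex.I) * hn
        exact mul_left_cancel₀ h2 hn'
      have hmz : m = n * k := by exact_mod_cast hmc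
      exact hdvd ⟨n, by linarith [hmz]⟩
    rw [geom_sum_eq hz1]
    have hzk : z ^ k.toNat = 1 := by
      rw [hz, ← Complex.exp_nat_mul]
      have : (k.toNat:ℂ) * (2 * (Real.pi:ℂ) * Complex.I * ((m:ℂ) / (k:ℂ))) = (m:ℂ) * (2 * (Real.pi:ℂ) * Complex.I) := by
        rw [hkk]
        field_simp
      rw [this, Complex.exp_int_mul_two_pi_mul_I]
    rw [hzk]
    simp [hdvd]

private lemma reindex (k M : ℤ) (hk : 0 < k) (f : ℤ → ℂ) :
    ∑ x ∈ Finset.Icc (-(k*M)) (k*M - 1), f x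
      = ∑ x' ∈ Finset.Icc (-M) (M-1), ∑ s ∈ Finset.Icc (0:ℤ) (k-1), f (k*x'+s) := by
  rw [← Finset.sum_product']
  refine (Finset.sum_nbij' (fun x => ((x / k, x % k) : ℤ × ℤ)) (fun p => k * p.1 + p.2)
    ?_ ?_ ?_ ?_ ?_).symm.symm
  · intro x hx
    simp only [Finset.mem_Icc] at hx
    simp only [Finset.mem_product, Finset.mem_Icc]
    have h1 : -M ≤ x / k := by
      rw [Int.le_ediv_iff_mul_le hk]
      nlinarith [hx.1]
    have h2 : x / k ≤ M - 1 := by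
      have : x / k < M := by
        rw [Int.ediv_lt_iff_lt_mul hk]
        nlinarith [hx.2]
      omega
    have h3 := Int.emod_nonneg x hk.ne'
    have h4 := Int.emod_lt_of_pos x hk
    exact ⟨⟨h1, h2⟩, ⟨h3, by omega⟩⟩
  · intro p hp
    simp only [Finset.mem_product, Finset.mem_Icc] at hp
    simp only [Finset.mem_Icc]
    constructor
    · nlinarith [hp.1.1, hp.2.1]
    · nlinarith [hp.1.2, hp.2.2]
  · intro x hx
    show k * (x / k) + x % k = x
    exact Int.mul_ediv_add_emod x k
  · intro p hp
    simp only [Finset.mem_product, Finset.mem_Icc] at hp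
    have h1 : (k * p.1 + p.2) / k = p.1 := by
      rw [add_comm, Int.add_mul_ediv_left p.2 p.1 hk.ne']
      rw [Int.ediv_eq_zero_of_lt hp.2.1 (by omega)]
      ring
    have h2 : (k * p.1 + p.2) % k = p.2 := by
      rw [add_comm, Int.add_mul_emod_self_left]
      exact Int.emod_eq_of_lt hp.2.1 (by omega)
    show ((k * p.1 + p.2) / k, (k * p.1 + p.2) % k) = p
    rw [h1, h2]
  · intro x hx
    show f x = f (k * (x / k) + x % k)
    rw [Int.mul_ediv_add_emod x k]

private lemma reindex2 (k M N : ℤ) (hk : 0 < k) (g : ℤ → ℤ → ℂ) :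
    ∑ x ∈ Finset.Icc (-(k*M)) (k*M - 1), ∑ y ∈ Finset.Icc (-(k*N)) (k*N - 1), g x y
      = ∑ x' ∈ Finset.Icc (-M) (M-1), ∑ s ∈ Finset.Icc (0:ℤ) (k-1),
          ∑ y' ∈ Finset.Icc (-N) (N-1), ∑ t ∈ Finset.Icc (0:ℤ) (k-1), g (k*x'+s) (k*y'+t) := by
  rw [reindex k M hk]
  exact Finset.sum_congr rfl fun x' _ => Finset.sum_congr rfl fun s _ => reindex k N hk _

section pulls
variable {R : Type*} [AddCommMonoid R]

private lemma pull1 (A B : Finset ℤ) (f : ℤ → ℤ → R) :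
    ∑ a ∈ A, ∑ b ∈ B, f a b = ∑ b ∈ B, ∑ a ∈ A, f a b := Finset.sum_comm

private lemma pull2 (A B1 B2 : Finset ℤ) (f : ℤ → ℤ → ℤ → R) :
    ∑ a ∈ A, ∑ b ∈ B1, ∑ c ∈ B2, f a b c = ∑ b ∈ B1, ∑ c ∈ B2, ∑ a ∈ A, f a b c := by
  rw [Finset.sum_comm]
  exact Finset.sum_congr rfl fun b _ => Finset.sum_comm

private lemma pull3 (A B1 B2 B3 : Finset ℤ) (f : ℤ → ℤ → ℤ → ℤ → R) :
    ∑ a ∈ A, ∑ b ∈ B1, ∑ c ∈ B2, ∑ d ∈ B3, f a b c d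
      = ∑ b ∈ B1, ∑ c ∈ B2, ∑ d ∈ B3, ∑ a ∈ A, f a b c d := by
  rw [Finset.sum_comm]
  exact Finset.sum_congr rfl fun b _ => pull2 _ _ _ _

private lemma pull4 (A B1 B2 B3 B4 : Finset ℤ) (f : ℤ → ℤ → ℤ → ℤ → ℤ → R) :
    ∑ a ∈ A, ∑ b ∈ B1, ∑ c ∈ B2, ∑ d ∈ B3, ∑ e ∈ B4, f a b c d e
      = ∑ b ∈ B1, ∑ c ∈ B2, ∑ d ∈ B3, ∑ e ∈ B4, ∑ a ∈ A, f a b c d e := by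
  rw [Finset.sum_comm]
  exact Finset.sum_congr rfl fun b _ => pull3 _ _ _ _ _

private lemma pull5 (A B1 B2 B3 B4 B5 : Finset ℤ) (f : ℤ → ℤ → ℤ → ℤ → ℤ → ℤ → R) :
    ∑ a ∈ A, ∑ b ∈ B1, ∑ c ∈ B2, ∑ d ∈ B3, ∑ e ∈ B4, ∑ x ∈ B5, f a b c d e x
      = ∑ b ∈ B1, ∑ c ∈ B2, ∑ d ∈ B3, ∑ e ∈ B4, ∑ x ∈ B5, ∑ a ∈ A, f a b c d e x := by
  rw [Finset.sum_comm]
  exact Finset.sum_congr rfl fun b _ => pull4 _ _ _ _ _ _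

private lemma pull6 (A B1 B2 B3 B4 B5 B6 : Finset ℤ) (f : ℤ → ℤ → ℤ → ℤ → ℤ → ℤ → ℤ → R) :
    ∑ a ∈ A, ∑ b ∈ B1, ∑ c ∈ B2, ∑ d ∈ B3, ∑ e ∈ B4, ∑ x ∈ B5, ∑ y ∈ B6, f a b c d e x y
      = ∑ b ∈ B1, ∑ c ∈ B2, ∑ d ∈ B3, ∑ e ∈ B4, ∑ x ∈ B5, ∑ y ∈ B6, ∑ a ∈ A, f a b c d e x y := by
  rw [Finset.sum_comm]
  exact Finset.sum_congr rfl fun b _ => pull5 _ _ _ _ _ _ _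

private lemma dvd_iff_eq (k s0 s : ℤ) (hk : 0 < k) (hs0 : s0 ∈ Finset.Icc (0:ℤ) (k-1))
    (hs : s ∈ Finset.Icc (0:ℤ) (k-1)) : (k ∣ s0 - s) ↔ s0 = s := by
  simp only [Finset.mem_Icc] at hs0 hs
  constructor
  · intro h
    have habs : |s0 - s| < k := abs_sub_lt_iff.mpr ⟨by omega, by omega⟩
    have := Int.eq_zero_of_abs_lt_dvd h habs
    omega
  · rintro rfl
    simp

private noncomputable def G (k M N u v : ℤ) (w X : ℤ → ℤ → ℂ) (x' s y' t s0 t0 a b : ℤ) : ℂ :=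
  w s0 t0 * X (k*x'+s) (k*y'+t) *
    Complex.exp (2*(Real.pi:ℂ)*Complex.I *
      (((u * (s0 - (k*x'+s)) : ℤ):ℂ) / (((2*(k*M)) : ℤ):ℂ) +
       ((v * (t0 - (k*y'+t)) : ℤ):ℂ) / (((2*(k*N)) : ℤ):ℂ))) *
    Complex.exp (2*(Real.pi:ℂ)*Complex.I * (((s0 - s : ℤ):ℂ) * (a:ℂ) / (k:ℂ))) *
    Complex.exp (2*(Real.pi:ℂ)*Complex.I * (((t0 - t : ℤ):ℂ) * (b:ℂ) / (k:ℂ)))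

private lemma step1 (k M N u v a b : ℤ) (hk : 0 < k) (hM0 : 0 < M) (hN0 : 0 < N)
    (w X : ℤ → ℤ → ℂ) :
    beta (k*M) (k*N) k w (u + 2*a*M) (v + 2*b*N) * dft (k*M) (k*N) X (u + 2*a*M) (v + 2*b*N)
      = ∑ x' ∈ Finset.Icc (-M) (M-1), ∑ s ∈ Finset.Icc (0:ℤ) (k-1),
        ∑ y' ∈ Finset.Icc (-N) (N-1), ∑ t ∈ Finset.Icc (0:ℤ) (k-1),
        ∑ s0 ∈ Finset.Icc (0:ℤ) (k-1), ∑ t0 ∈ Finset.Icc (0:ℤ) (k-1),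
          G k M N u v w X x' s y' t s0 t0 a b := by
  have hkC : (k:ℂ) ≠ 0 := by exact_mod_cast hk.ne'
  have hMC : (M:ℂ) ≠ 0 := by exact_mod_cast hM0.ne'
  have hNC : (N:ℂ) ≠ 0 := by exact_mod_cast hN0.ne'
  unfold beta dft
  rw [reindex2 k M N hk]
  simp only [Finset.sum_mul, Finset.mul_sum]
  refine Finset.sum_congr rfl fun x' hx' => Finset.sum_congr rfl fun s hs =>
    Finset.sum_congr rfl fun y' hy' => Finset.sum_congr rfl fun t ht =>
    Finset.sum_congr rfl fun s0 hs0 => Finset.sum_congr rfl fun t0 ht0 => ?_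
  unfold G
  rw [mul_mul_mul_comm]
  have hexp : Complex.exp ((2 * (Real.pi:ℂ) * Complex.I) *
        ((((u + 2*a*M : ℤ)):ℂ) * ((s0:ℤ):ℂ) / (2 * (((k*M : ℤ)):ℂ)) +
         (((v + 2*b*N : ℤ)):ℂ) * ((t0:ℤ):ℂ) / (2 * (((k*N : ℤ)):ℂ)))) *
      Complex.exp (-(2 * (Real.pi:ℂ) * Complex.I) *
        ((((u + 2*a*M : ℤ)):ℂ) * (((k*x'+s : ℤ)):ℂ) / (2 * (((k*M : ℤ)):ℂ)) +
         (((v + 2*b*N : ℤ)):ℂ) * (((k*y'+t : ℤ)):ℂ) / (2 * (((k*N : ℤ)):ℂ))))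
      = Complex.exp (2*(Real.pi:ℂ)*Complex.I *
          (((u * (s0 - (k*x'+s)) : ℤ):ℂ) / (((2*(k*M)) : ℤ):ℂ) +
           ((v * (t0 - (k*y'+t)) : ℤ):ℂ) / (((2*(k*N)) : ℤ):ℂ))) *
        Complex.exp (2*(Real.pi:ℂ)*Complex.I * (((s0 - s : ℤ):ℂ) * (a:ℂ) / (k:ℂ))) *
        Complex.exp (2*(Real.pi:ℂ)*Complex.I * (((t0 - t : ℤ):ℂ) * (b:ℂ) / (k:ℂ))) := by
    simp only [← Complex.exp_add]
    rw [Complex.exp_eq_exp_iff_exists_int]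
    refine ⟨-(a*x') - b*y', ?_⟩
    push_cast
    have d1 : ∀ z : ℂ, ((u:ℂ) + 2*(a:ℂ)*(M:ℂ)) * z / (2*((k:ℂ)*(M:ℂ)))
        = (u:ℂ) * z / (2*((k:ℂ)*(M:ℂ))) + (a:ℂ) * z / (k:ℂ) := by
      intro z; field_simp
    have d2 : ∀ z : ℂ, ((v:ℂ) + 2*(b:ℂ)*(N:ℂ)) * z / (2*((k:ℂ)*(N:ℂ)))
        = (v:ℂ) * z / (2*((k:ℂ)*(N:ℂ))) + (b:ℂ) * z / (k:ℂ) := by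
      intro z; field_simp
    have d3 : (a:ℂ) * ((k:ℂ)*(x':ℂ)+(s:ℂ)) / (k:ℂ) = (a:ℂ)*(x':ℂ) + (a:ℂ)*(s:ℂ)/(k:ℂ) := by
      field_simp
    have d4 : (b:ℂ) * ((k:ℂ)*(y':ℂ)+(t:ℂ)) / (k:ℂ) = (b:ℂ)*(y':ℂ) + (b:ℂ)*(t:ℂ)/(k:ℂ) := by
      field_simp
    rw [d1, d1, d2, d2, d3, d4]
    ring
  rw [hexp]
  ring

private lemma step2 (k M N u v : ℤ) (hk : 0 < k) (hM0 : 0 < M) (hN0 : 0 < N)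
    (w X : ℤ → ℤ → ℂ) (x' s y' t : ℤ)
    (hs : s ∈ Finset.Icc (0:ℤ) (k-1)) (ht : t ∈ Finset.Icc (0:ℤ) (k-1)) :
    ∑ s0 ∈ Finset.Icc (0:ℤ) (k-1), ∑ t0 ∈ Finset.Icc (0:ℤ) (k-1),
      ∑ a ∈ Finset.Icc (0:ℤ) (k-1), ∑ b ∈ Finset.Icc (0:ℤ) (k-1),
        G k M N u v w X x' s y' t s0 t0 a b
    = (k:ℂ) * (k:ℂ) * (w s t * X (k*x'+s) (k*y'+t) *
        Complex.exp (-(2 * (Real.pi : ℂ) * Complex.I) *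
          ((u : ℂ) * (x' : ℂ) / (2 * (M : ℂ)) + (v : ℂ) * (y' : ℂ) / (2 * (N : ℂ))))) := by
  have hkC : (k:ℂ) ≠ 0 := by exact_mod_cast hk.ne'
  have hMC : (M:ℂ) ≠ 0 := by exact_mod_cast hM0.ne'
  have hNC : (N:ℂ) ≠ 0 := by exact_mod_cast hN0.ne'
  have h1 : ∀ s0 ∈ Finset.Icc (0:ℤ) (k-1), ∀ t0 ∈ Finset.Icc (0:ℤ) (k-1),
      (∑ a ∈ Finset.Icc (0:ℤ) (k-1), ∑ b ∈ Finset.Icc (0:ℤ) (k-1),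
        G k M N u v w X x' s y' t s0 t0 a b)
      = (if s0 = s then (if t0 = t then
          ((k:ℂ) * (k:ℂ)) * (w s0 t0 * X (k*x'+s) (k*y'+t) *
            Complex.exp (2*(Real.pi:ℂ)*Complex.I *
              (((u * (s0 - (k*x'+s)) : ℤ):ℂ) / (((2*(k*M)) : ℤ):ℂ) +
               ((v * (t0 - (k*y'+t)) : ℤ):ℂ) / (((2*(k*N)) : ℤ):ℂ)))) else 0) else 0) := by
    intro s0 hs0 t0 ht0
    unfold G
    simp only [← Finset.mul_sum, ← Finset.sum_mul]
    rw [orth k (s0-s) hk, orth k (t0-t) hk]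
    rw [if_congr (dvd_iff_eq k s0 s hk hs0 hs) rfl rfl,
        if_congr (dvd_iff_eq k t0 t hk ht0 ht) rfl rfl]
    by_cases h1 : s0 = s <;> by_cases h2 : t0 = t <;> simp [h1, h2] <;> ring
  rw [Finset.sum_congr rfl (fun s0 hs0 => Finset.sum_congr rfl (fun t0 ht0 => h1 s0 hs0 t0 ht0))]
  have h2 : ∀ s0 ∈ Finset.Icc (0:ℤ) (k-1),
      (∑ t0 ∈ Finset.Icc (0:ℤ) (k-1), (if s0 = s then (if t0 = t then
          ((k:ℂ) * (k:ℂ)) * (w s0 t0 * X (k*x'+s) (k*y'+t) *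
            Complex.exp (2*(Real.pi:ℂ)*Complex.I *
              (((u * (s0 - (k*x'+s)) : ℤ):ℂ) / (((2*(k*M)) : ℤ):ℂ) +
               ((v * (t0 - (k*y'+t)) : ℤ):ℂ) / (((2*(k*N)) : ℤ):ℂ)))) else 0) else 0))
      = (if s0 = s then
          ((k:ℂ) * (k:ℂ)) * (w s0 t * X (k*x'+s) (k*y'+t) *
            Complex.exp (2*(Real.pi:ℂ)*Complex.I *
              (((u * (s0 - (k*x'+s)) : ℤ):ℂ) / (((2*(k*M)) : ℤ):ℂ) +
               ((v * (t - (k*y'+t)) : ℤ):ℂ) / (((2*(k*N)) : ℤ):ℂ)))) else 0) := by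
    intro s0 _
    rw [Finset.sum_ite_irrel]
    rw [Finset.sum_const_zero]
    congr 1
    rw [Finset.sum_ite_eq' (Finset.Icc (0:ℤ) (k-1)) t, if_pos ht]
  rw [Finset.sum_congr rfl h2]
  rw [Finset.sum_ite_eq' (Finset.Icc (0:ℤ) (k-1)) s, if_pos hs]
  have harg : Complex.exp (2*(Real.pi:ℂ)*Complex.I *
        (((u * (s - (k*x'+s)) : ℤ):ℂ) / (((2*(k*M)) : ℤ):ℂ) +
         ((v * (t - (k*y'+t)) : ℤ):ℂ) / (((2*(k*N)) : ℤ):ℂ)))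
      = Complex.exp (-(2 * (Real.pi : ℂ) * Complex.I) *
          ((u : ℂ) * (x' : ℂ) / (2 * (M : ℂ)) + (v : ℂ) * (y' : ℂ) / (2 * (N : ℂ)))) := by
    congr 1
    push_cast
    field_simp
    ring
  rw [harg]

theorem stmt_1 (H W k : ℤ) (hH : 0 < H) (hW : 0 < W) (hk : 0 < k)
    (hkH : k ∣ H) (hkW : k ∣ W) (w : ℤ → ℤ → ℂ) (X : ℤ → ℤ → ℂ) :
    ∀ u v : ℤ,
      dft (H / k) (W / k) (downsample k w X) u v =
        (1 / (k : ℂ) ^ 2) *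
          ∑ a ∈ Finset.Icc (0 : ℤ) (k - 1), ∑ b ∈ Finset.Icc (0 : ℤ) (k - 1),
            beta H W k w (u + 2 * a * (H / k)) (v + 2 * b * (W / k)) *
              dft H W X (u + 2 * a * (H / k)) (v + 2 * b * (W / k)) := by
  obtain ⟨M, rfl⟩ := hkH
  obtain ⟨N, rfl⟩ := hkW
  intro u v
  have hM0 : 0 < M := by nlinarith
  have hN0 : 0 < N := by nlinarith
  have hk0 : (k:ℂ) ≠ 0 := by exact_mod_cast hk.ne'
  have hMk : k * M / k = M := Int.mul_ediv_cancel_left M hk.ne'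
  have hNk : k * N / k = N := Int.mul_ediv_cancel_left N hk.ne'
  rw [hMk, hNk]
  have key : (∑ a ∈ Finset.Icc (0:ℤ) (k-1), ∑ b ∈ Finset.Icc (0:ℤ) (k-1),
        beta (k*M) (k*N) k w (u + 2*a*M) (v + 2*b*N) *
          dft (k*M) (k*N) X (u + 2*a*M) (v + 2*b*N))
      = (k:ℂ)^2 * dft M N (downsample k w X) u v := by
    calc
      (∑ a ∈ Finset.Icc (0:ℤ) (k-1), ∑ b ∈ Finset.Icc (0:ℤ) (k-1),
          beta (k*M) (k*N) k w (u + 2*a*M) (v + 2*b*N) *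
            dft (k*M) (k*N) X (u + 2*a*M) (v + 2*b*N))
          = ∑ a ∈ Finset.Icc (0:ℤ) (k-1), ∑ b ∈ Finset.Icc (0:ℤ) (k-1),
              ∑ x' ∈ Finset.Icc (-M) (M-1), ∑ s ∈ Finset.Icc (0:ℤ) (k-1),
              ∑ y' ∈ Finset.Icc (-N) (N-1), ∑ t ∈ Finset.Icc (0:ℤ) (k-1),
              ∑ s0 ∈ Finset.Icc (0:ℤ) (k-1), ∑ t0 ∈ Finset.Icc (0:ℤ) (k-1),
                G k M N u v w X x' s y' t s0 t0 a b := by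
            refine Finset.sum_congr rfl fun a _ => Finset.sum_congr rfl fun b _ => ?_
            exact step1 k M N u v a b hk hM0 hN0 w X
      _ = ∑ a ∈ Finset.Icc (0:ℤ) (k-1),
              ∑ x' ∈ Finset.Icc (-M) (M-1), ∑ s ∈ Finset.Icc (0:ℤ) (k-1),
              ∑ y' ∈ Finset.Icc (-N) (N-1), ∑ t ∈ Finset.Icc (0:ℤ) (k-1),
              ∑ s0 ∈ Finset.Icc (0:ℤ) (k-1), ∑ t0 ∈ Finset.Icc (0:ℤ) (k-1),
              ∑ b ∈ Finset.Icc (0:ℤ) (k-1),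
                G k M N u v w X x' s y' t s0 t0 a b := by
            refine Finset.sum_congr rfl fun a _ => ?_
            exact pull6 _ _ _ _ _ _ _ _
      _ = ∑ x' ∈ Finset.Icc (-M) (M-1), ∑ s ∈ Finset.Icc (0:ℤ) (k-1),
              ∑ y' ∈ Finset.Icc (-N) (N-1), ∑ t ∈ Finset.Icc (0:ℤ) (k-1),
              ∑ s0 ∈ Finset.Icc (0:ℤ) (k-1), ∑ t0 ∈ Finset.Icc (0:ℤ) (k-1),
              ∑ a ∈ Finset.Icc (0:ℤ) (k-1), ∑ b ∈ Finset.Icc (0:ℤ) (k-1),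
                G k M N u v w X x' s y' t s0 t0 a b := by
            exact pull6 _ _ _ _ _ _ _ _
      _ = ∑ x' ∈ Finset.Icc (-M) (M-1), ∑ s ∈ Finset.Icc (0:ℤ) (k-1),
              ∑ y' ∈ Finset.Icc (-N) (N-1), ∑ t ∈ Finset.Icc (0:ℤ) (k-1),
              (k:ℂ) * (k:ℂ) * (w s t * X (k*x'+s) (k*y'+t) *
                Complex.exp (-(2 * (Real.pi : ℂ) * Complex.I) *
                  ((u : ℂ) * (x' : ℂ) / (2 * (M : ℂ)) + (v : ℂ) * (y' : ℂ) / (2 * (N : ℂ))))) := by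
            refine Finset.sum_congr rfl fun x' _ => Finset.sum_congr rfl fun s hs =>
              Finset.sum_congr rfl fun y' _ => Finset.sum_congr rfl fun t ht => ?_
            exact step2 k M N u v hk hM0 hN0 w X x' s y' t hs ht
      _ = (k:ℂ)^2 * dft M N (downsample k w X) u v := by
            unfold dft downsample
            simp only [Finset.mul_sum, Finset.sum_mul]
            refine Finset.sum_congr rfl fun x' _ => ?_
            rw [Finset.sum_comm]
            refine Finset.sum_congr rfl fun y' _ => Finset.sum_congr rfl fun s _ =>
              Finset.sum_congr rfl fun t _ => ?_
            ring
  rw [key]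
  field_simp
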